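/- Let D_0 be a fixed closed disk in the unit disk U centered at 0, and let D_1 be a closed disk in U intersecting D_0 with a fixed dihedral angle in [0, π/2]. Then the hyperbolic radius of D_1 (in the Poincaré metric on U) is a strictly increasing function of its euclidean radius, and for any real γ > 1 with γD_0, γD_1 ⊂ U, one has ρ_hyp(γD_1)/ρ_hyp(D_1) > ρ_hyp(γD_0)/ρ_hyp(D_0), where γD = {γz : z ∈ D}. -/

import Mathlib

set_option maxHeartbeats 1000000

open Real Metric Pointwise

/-- The inverse hyperbolic tangent. -/
noncomputable def artanh (x : ℝ) : ℝ := Real.log ((1 + x) / (1 - x)) / 2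

/-- The Poincaré (hyperbolic) distance between two points of the unit disk. -/
noncomputable def hdist (z w : ℂ) : ℝ :=
  2 * _root_.artanh ‖(z - w) / (1 - (starRingEnd ℂ) z * w)‖

/-- The hyperbolic radius of a disk contained in the unit disk, defined as half
of its hyperbolic diameter. -/
noncomputable def rhyp (D : Set ℂ) : ℝ :=
  sSup {d | ∃ z ∈ D, ∃ w ∈ D, d = hdist z w} / 2

/-- The center distance of a disk of radius `s` meeting the disk `D₀` of radius
`r₀` centered at `0` with dihedral angle `θ`; we place the center on the
positive real axis. -/
noncomputable def cen (r₀ s θ : ℝ) : ℂ :=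
  (Real.sqrt (r₀ ^ 2 + s ^ 2 + 2 * r₀ * s * Real.cos θ) : ℝ)

/-! ### _root_.artanh API -/

lemma artanh_zero : _root_.artanh 0 = 0 := by simp [_root_.artanh]

lemma artanh_neg (x : ℝ) : _root_.artanh (-x) = - _root_.artanh x := by
  unfold _root_.artanh
  rw [show (1 + -x) / (1 - -x) = ((1+x)/(1-x))⁻¹ by rw [inv_div]; ring_nf, Real.log_inv]
  ring

lemma artanh_lt_artanh {x y : ℝ} (hx : -1 < x) (hxy : x < y) (hy : y < 1) :
    _root_.artanh x < _root_.artanh y := by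
  have h1 : 0 < 1 - x := by linarith
  have h1x : 0 < 1 + x := by linarith
  have h2 : 0 < 1 - y := by linarith
  have h3 : 0 < (1 + x) / (1 - x) := by positivity
  have h4 : (1 + x) / (1 - x) < (1 + y) / (1 - y) := by
    rw [div_lt_div_iff₀ h1 h2]; nlinarith
  have := Real.log_lt_log h3 h4
  unfold _root_.artanh; linarith

lemma artanh_nonneg {x : ℝ} (hx : 0 ≤ x) (hx1 : x < 1) : 0 ≤ _root_.artanh x := by
  have h : (1:ℝ) ≤ (1 + x) / (1 - x) := by
    rw [le_div_iff₀ (by linarith)]; linarith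
  have := Real.log_nonneg h
  unfold _root_.artanh; linarith

lemma artanh_pos {x : ℝ} (hx : 0 < x) (hx1 : x < 1) : 0 < _root_.artanh x := by
  have := _root_.artanh_lt_artanh (by norm_num : (-1:ℝ) < 0) hx hx1
  rwa [_root_.artanh_zero] at this

lemma artanh_le_artanh {x y : ℝ} (hx : -1 < x) (hxy : x ≤ y) (hy : y < 1) :
    _root_.artanh x ≤ _root_.artanh y := by
  rcases eq_or_lt_of_le hxy with rfl|h
  · exact le_refl _
  · exact (_root_.artanh_lt_artanh hx h hy).le

lemma artanh_sub {a b : ℝ} (ha : -1 < a) (ha1 : a < 1) (hb : -1 < b) (hb1 : b < 1) :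
    _root_.artanh ((b - a) / (1 - a * b)) = _root_.artanh b - _root_.artanh a := by
  have h1 : 0 < 1 - a * b := by nlinarith
  have h2 : 0 < 1 - a := by linarith
  have h3 : 0 < 1 + a := by linarith
  have h4 : 0 < 1 - b := by linarith
  have h5 : 0 < 1 + b := by linarith
  unfold _root_.artanh
  have key : (1 + (b - a) / (1 - a * b)) / (1 - (b - a) / (1 - a * b))
      = ((1 + b) / (1 - b)) / ((1 + a) / (1 - a)) := by
    rw [div_eq_div_iff]
    · field_simp [h1.ne', show (1:ℝ) - b*a ≠ 0 by nlinarith]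
      ring
    · have hd : 0 < 1 - (b - a) / (1 - a * b) := by
        rw [sub_pos, div_lt_one h1]; nlinarith
      positivity
    · positivity
  rw [key, Real.log_div (by positivity) (by positivity)]
  ring

/-! ### The key algebraic inequality -/

lemma step1 (s p q y v X Y : ℝ) (hs : 0 < s)
    (hy : y^2 ≤ (s-p)*(s+p)) (hv : v^2 ≤ (s-q)*(s+q)) :
    0 ≤ X^2*((s+p)*(s+q)) + Y^2*((s-p)*(s-q)) + 2*X*Y*y*v := by
  have hp1 : 0 ≤ s - p := by nlinarith [sq_nonneg y, sq_nonneg (s+p)]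
  have hp2 : 0 ≤ s + p := by nlinarith [sq_nonneg y, sq_nonneg (s-p)]
  have hq1 : 0 ≤ s - q := by nlinarith [sq_nonneg v, sq_nonneg (s+q)]
  have hq2 : 0 ≤ s + q := by nlinarith [sq_nonneg v, sq_nonneg (s-q)]
  set a := X^2*((s+p)*(s+q)) with ha
  set b := Y^2*((s-p)*(s-q)) with hb
  have haa : 0 ≤ a := by positivity
  have hbb : 0 ≤ b := by positivity
  have h1 : y^2*v^2 ≤ ((s-p)*(s+p))*((s-q)*(s+q)) :=
    mul_le_mul hy hv (sq_nonneg v) (by positivity)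
  have h4 : (2*X*Y*y*v)^2 ≤ 4*(a*b) := by
    have h5 : X^2*Y^2*(y^2*v^2) ≤ X^2*Y^2*(((s-p)*(s+p))*((s-q)*(s+q))) :=
      mul_le_mul_of_nonneg_left h1 (by positivity)
    calc (2*X*Y*y*v)^2 = 4*(X^2*Y^2*(y^2*v^2)) := by ring
      _ ≤ 4*(X^2*Y^2*(((s-p)*(s+p))*((s-q)*(s+q)))) := by linarith
      _ = 4*(a*b) := by rw [ha, hb]; ring
  rcases le_or_gt 0 (2*X*Y*y*v) with h|h
  · linarith
  · nlinarith [h4, sq_nonneg (a-b)]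

lemma keysq (c s p q y v : ℝ) (hc : 0 ≤ c) (hs : 0 < s) (h1 : c+s<1)
    (hp : p^2+y^2 ≤ s^2) (hq : q^2+v^2 ≤ s^2) :
    ((1-c^2+s^2)^2-4*s^2)*((p-q)^2+(y-v)^2) ≤
      4*s^2*((1-c^2-s^2)-2*c*p)*((1-c^2-s^2)-2*c*q) := by
  have e1 : (0:ℝ) ≤ 1-s-c := by linarith
  have e2 : (0:ℝ) ≤ 1-s+c := by linarith
  have e3 : (0:ℝ) ≤ 1+s-c := by linarith
  have e4 : (0:ℝ) ≤ 1+s+c := by linarith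
  have hM : (0:ℝ) ≤ (1-c^2+s^2)^2-4*s^2 := by
    nlinarith [mul_nonneg (mul_nonneg (mul_nonneg e1 e2) e3) e4]
  have h2 := step1 s p q y v (1-c^2-s^2-2*c*s) (1-c^2-s^2+2*c*s) hs (by nlinarith) (by nlinarith)
  nlinarith [mul_nonneg hM (sub_nonneg.2 hp), mul_nonneg hM (sub_nonneg.2 hq)]

lemma keysq2 (c s x y u v : ℝ) (hc : 0 ≤ c) (hs : 0 < s) (h1 : c+s<1)
    (hz : (x-c)^2+y^2 ≤ s^2) (hw : (u-c)^2+v^2 ≤ s^2) :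
    (1-c^2+s^2)^2 * ((x-u)^2+(y-v)^2) ≤
      4*s^2*((1-(x*u+y*v))^2 + (x*v-y*u)^2) := by
  have key := keysq c s (x-c) (u-c) y v hc hs h1 hz hw
  have hxc : x - c ≤ s := by nlinarith [sq_nonneg y, sq_nonneg (x-c-s)]
  have huc : u - c ≤ s := by nlinarith [sq_nonneg v, sq_nonneg (u-c-s)]
  have ha1 : 1+c^2-s^2-2*c*x ≤ 1-x^2-y^2 := by nlinarith
  have hb1 : 1+c^2-s^2-2*c*u ≤ 1-u^2-v^2 := by nlinarith
  have ha1p : 0 ≤ 1+c^2-s^2-2*c*x := by nlinarith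
  have hb1p : 0 ≤ 1+c^2-s^2-2*c*u := by nlinarith
  have hprod : (1+c^2-s^2-2*c*x) * (1+c^2-s^2-2*c*u) ≤ (1-x^2-y^2)*(1-u^2-v^2) :=
    mul_le_mul ha1 hb1 hb1p (by linarith)
  have hN : (1-c^2-s^2)-2*c*(x-c) = 1+c^2-s^2-2*c*x := by ring
  have hN' : (1-c^2-s^2)-2*c*(u-c) = 1+c^2-s^2-2*c*u := by ring
  rw [hN, hN'] at key
  have h4 : 4*s^2*((1+c^2-s^2-2*c*x) * (1+c^2-s^2-2*c*u)) ≤ 4*s^2*((1-x^2-y^2)*(1-u^2-v^2)) :=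
    mul_le_mul_of_nonneg_left hprod (by positivity)
  nlinarith [key, h4]

lemma mem_cb {c s : ℝ} {z : ℂ} (hz : z ∈ closedBall (c:ℂ) s) :
    (z.re - c)^2 + z.im^2 ≤ s^2 := by
  have h := mem_closedBall.1 hz
  rw [Complex.dist_eq] at h
  have h2 : (‖(z - c)‖)^2 ≤ s^2 := by
    have h0 := norm_nonneg (z - c); nlinarith
  rw [Complex.sq_norm, Complex.normSq_apply] at h2
  simp only [Complex.sub_re, Complex.sub_im, Complex.ofReal_re, Complex.ofReal_im] at h2
  nlinarith [h2]

lemma abs_lt_one {c s : ℝ} {z : ℂ} (hc : 0 ≤ c) (h1 : c+s<1)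
    (hz : z ∈ closedBall (c:ℂ) s) : ‖z‖ < 1 := by
  have h := mem_closedBall.1 hz
  rw [Complex.dist_eq] at h
  have hrc : ‖(c:ℂ)‖ = c := by rw [Complex.norm_real, Real.norm_eq_abs, abs_of_nonneg hc]
  calc ‖z‖ ≤ ‖(z - (c:ℂ))‖ + ‖(c:ℂ)‖ := by
        simpa using norm_add_le (z - c) c
    _ ≤ s + c := by rw [hrc]; linarith
    _ < 1 := by linarith

lemma one_sub_ne {z w : ℂ} (hz : ‖z‖ < 1) (hw : ‖w‖ < 1) :
    (1:ℂ) - (starRingEnd ℂ) z * w ≠ 0 := by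
  intro h
  have h2 : (starRingEnd ℂ) z * w = 1 := by linear_combination -h
  have h3 : ‖((starRingEnd ℂ) z * w)‖ = 1 := by rw [h2]; simp
  rw [norm_mul, Complex.norm_conj] at h3
  nlinarith [norm_nonneg z, norm_nonneg w]

lemma pseudo_le {c s : ℝ} {z w : ℂ} (hc : 0 ≤ c) (hs : 0 < s) (h1 : c+s<1)
    (hz : z ∈ closedBall (c:ℂ) s) (hw : w ∈ closedBall (c:ℂ) s) :
    ‖((z - w) / (1 - (starRingEnd ℂ) z * w))‖ ≤ 2*s/(1-c^2+s^2) := by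
  have hT : (0:ℝ) < 1-c^2+s^2 := by nlinarith
  have hne := one_sub_ne (abs_lt_one hc h1 hz) (abs_lt_one hc h1 hw)
  have hb : 0 < ‖(1 - (starRingEnd ℂ) z * w)‖ := by
    simpa [norm_pos_iff] using hne
  set a := ‖(z - w)‖ with ha
  set b := ‖(1 - (starRingEnd ℂ) z * w)‖ with hbdef
  have key := keysq2 c s z.re z.im w.re w.im hc hs h1 (mem_cb hz) (mem_cb hw)
  have ha2 : a^2 = (z.re - w.re)^2 + (z.im - w.im)^2 := by
    rw [ha, Complex.sq_norm, Complex.normSq_apply]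
    simp only [Complex.sub_re, Complex.sub_im]; ring
  have hb2 : b^2 = (1-(z.re*w.re+z.im*w.im))^2 + (z.re*w.im - z.im*w.re)^2 := by
    rw [hbdef, Complex.sq_norm, Complex.normSq_apply]
    simp only [Complex.sub_re, Complex.sub_im, Complex.mul_re, Complex.mul_im,
      Complex.one_re, Complex.one_im, Complex.conj_re, Complex.conj_im]
    ring
  have hsq : (a * (1-c^2+s^2))^2 ≤ (2*s*b)^2 := by
    have e1 : (a * (1-c^2+s^2))^2 = (1-c^2+s^2)^2 * ((z.re - w.re)^2 + (z.im - w.im)^2) := by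
      rw [mul_pow, ha2]; ring
    have e2 : (2*s*b)^2 = 4*s^2*((1-(z.re*w.re+z.im*w.im))^2 + (z.re*w.im - z.im*w.re)^2) := by
      rw [mul_pow, hb2]; ring
    rw [e1, e2]; exact key
  rw [norm_div, div_le_div_iff₀ hb hT]
  nlinarith [hsq, mul_nonneg (norm_nonneg (z-w)) hT.le,
    mul_nonneg (by linarith : (0:ℝ) ≤ 2*s) hb.le]

/-! ### The hyperbolic radius of a euclidean disk -/

lemma rhyp_closedBall (c s : ℝ) (hc : 0 ≤ c) (hs : 0 < s) (h1 : c + s < 1) :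
    rhyp (closedBall (c:ℂ) s) = _root_.artanh (c+s) - _root_.artanh (c-s) := by
  have hs1 : s < 1 := by linarith
  have hT : (0:ℝ) < 1-c^2+s^2 := by nlinarith
  set K : ℝ := 2*s/(1-c^2+s^2) with hKdef
  have hK1 : K < 1 := by rw [hKdef, div_lt_one hT]; nlinarith
  have hK0 : 0 < K := by positivity
  set S : Set ℝ := {d | ∃ z ∈ closedBall (c:ℂ) s, ∃ w ∈ closedBall (c:ℂ) s, d = hdist z w}
    with hSdef
  have hub : ∀ d ∈ S, d ≤ 2 * _root_.artanh K := by
    rintro d ⟨z, hz, w, hw, rfl⟩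
    have h := pseudo_le hc hs h1 hz hw
    have h2 := _root_.artanh_le_artanh
      (lt_of_lt_of_le (by norm_num) (norm_nonneg ((z - w) / (1 - (starRingEnd ℂ) z * w))))
      h hK1
    unfold hdist; linarith
  have hmem : 2 * _root_.artanh K ∈ S := by
    refine ⟨((c-s : ℝ) : ℂ), ?_, ((c+s : ℝ) : ℂ), ?_, ?_⟩
    · rw [mem_closedBall, Complex.dist_eq]
      have h3 : ((c-s : ℝ) : ℂ) - (c : ℂ) = ((-s : ℝ) : ℂ) := by push_cast; ring
      rw [h3, Complex.norm_real, Real.norm_eq_abs, abs_of_nonpos (by linarith)]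
      linarith
    · rw [mem_closedBall, Complex.dist_eq]
      have h3 : ((c+s : ℝ) : ℂ) - (c : ℂ) = ((s : ℝ) : ℂ) := by push_cast; ring
      rw [h3, Complex.norm_real, Real.norm_eq_abs, abs_of_nonneg hs.le]
    · unfold hdist
      congr 1
      have e1 : (((c-s : ℝ) : ℂ) - ((c+s : ℝ) : ℂ)) / (1 - (starRingEnd ℂ) ((c-s : ℝ) : ℂ) * ((c+s : ℝ) : ℂ))
          = ((((c-s) - (c+s)) / (1 - (c-s)*(c+s)) : ℝ) : ℂ) := by
        rw [Complex.conj_ofReal]; push_cast; ring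
      rw [e1, Complex.norm_real, Real.norm_eq_abs]
      have d1 : 1 - (c-s)*(c+s) ≠ 0 := by nlinarith
      have e2 : ((c-s) - (c+s)) / (1 - (c-s)*(c+s)) = -K := by
        rw [hKdef]; field_simp; ring
      rw [e2, abs_neg, abs_of_pos hK0]
  have hsup : sSup S = 2 * _root_.artanh K :=
    le_antisymm (csSup_le ⟨_, hmem⟩ hub) (le_csSup ⟨_, hub⟩ hmem)
  have e3 : K = ((c+s) - (c-s)) / (1 - (c-s)*(c+s)) := by
    have d1 : 1 - (c-s)*(c+s) ≠ 0 := by nlinarith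
    rw [hKdef]; field_simp [hT.ne', show (1:ℝ) - (c+s)*(c-s) ≠ 0 by nlinarith]; ring
  rw [rhyp, ← hSdef, hsup, e3,
    _root_.artanh_sub (by linarith) (by linarith) (by linarith) (by linarith)]
  ring

lemma rhyp_closedBall_K (c s : ℝ) (hc : 0 ≤ c) (hs : 0 < s) (h1 : c + s < 1) :
    rhyp (closedBall (c:ℂ) s) = _root_.artanh (2*s/(1-c^2+s^2)) := by
  rw [rhyp_closedBall c s hc hs h1,
    ← _root_.artanh_sub (a := c-s) (b := c+s) (by linarith) (by linarith) (by linarith) (by linarith)]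
  congr 1
  have hT : (0:ℝ) < 1-c^2+s^2 := by nlinarith
  have d1 : 1 - (c-s)*(c+s) ≠ 0 := by nlinarith
  field_simp [hT.ne', show (1:ℝ) - (c+s)*(c-s) ≠ 0 by nlinarith]
  ring

/-! ### Calculus lemmas -/

lemma hasDerivAt_artanh {x : ℝ} (h1 : -1 < x) (h2 : x < 1) :
    HasDerivAt _root_.artanh (1/(1-x^2)) x := by
  have h1x : (0:ℝ) < 1 + x := by linarith
  have h2x : (0:ℝ) < 1 - x := by linarith
  have hu : HasDerivAt (fun y : ℝ => 1 + y) 1 x := (hasDerivAt_id x).const_add 1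
  have hv : HasDerivAt (fun y : ℝ => 1 - y) (-1) x := by
    simpa using (hasDerivAt_id x).const_sub 1
  have hg : HasDerivAt (fun y : ℝ => (1+y)/(1-y))
      ((1*(1-x) - (1+x)*(-1))/(1-x)^2) x := hu.div hv h2x.ne'
  have hpos : 0 < (1+x)/(1-x) := by positivity
  have hl := (Real.hasDerivAt_log hpos.ne').comp x hg
  have h5 : HasDerivAt (fun y : ℝ => Real.log ((1+y)/(1-y)) / 2)
      ((((1+x)/(1-x))⁻¹ * ((1*(1-x) - (1+x)*(-1))/(1-x)^2)) / 2) x := hl.div_const 2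
  have haux : (1:ℝ) - x^2 ≠ 0 := by nlinarith
  refine h5.congr_deriv ?_
  rw [inv_div]
  field_simp
  ring

lemma hasDerivAt_artanh_comp {γ x : ℝ} (h1 : -1 < γ*x) (h2 : γ*x < 1) :
    HasDerivAt (fun t : ℝ => _root_.artanh (γ*t)) (γ/(1-(γ*x)^2)) x := by
  have h := (hasDerivAt_artanh h1 h2).comp x ((hasDerivAt_id x).const_mul γ)
  have haux : (1:ℝ) - (γ*x)^2 ≠ 0 := by nlinarith
  refine h.congr_deriv ?_
  field_simp

lemma F_pos {γ t : ℝ} (hγ : 1 < γ) (ht : 0 < t) (ht1 : γ*t < 1) :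
    0 < γ*(1-t^2)*_root_.artanh t - (1-γ^2*t^2)*_root_.artanh (γ*t) := by
  set F : ℝ → ℝ := fun u => γ*(1-u^2)*_root_.artanh u - (1-γ^2*u^2)*_root_.artanh (γ*u) with hF
  have hγ0 : 0 < γ := by linarith
  have hbound : ∀ u ∈ Set.Icc (0:ℝ) t, -1 < u ∧ u < 1 ∧ -1 < γ*u ∧ γ*u < 1 := by
    rintro u ⟨hu0, hut⟩
    have h : γ*u ≤ γ*t := by nlinarith
    have hu1 : u < 1 := by nlinarith
    exact ⟨by linarith, hu1, by nlinarith, by linarith⟩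
  have hder : ∀ u, -1 < u → u < 1 → -1 < γ*u → γ*u < 1 →
      HasDerivAt F (2*γ*u*(γ*_root_.artanh (γ*u) - _root_.artanh u)) u := by
    intro u hu1 hu2 hu3 hu4
    have d1 : HasDerivAt (fun w : ℝ => γ*(1-w^2)*_root_.artanh w)
        ((γ*(-2*u))*_root_.artanh u + (γ*(1-u^2))*(1/(1-u^2))) u := by
      have ha : HasDerivAt (fun w : ℝ => γ*(1-w^2)) (γ*(-2*u)) u := by
        have h6 := ((hasDerivAt_pow 2 u).const_sub 1).const_mul γ
        simpa using h6.congr_deriv (by ring)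
      exact ha.mul (hasDerivAt_artanh hu1 hu2)
    have d2 : HasDerivAt (fun w : ℝ => (1-γ^2*w^2)*_root_.artanh (γ*w))
        ((-(γ^2*(2*u)))*_root_.artanh (γ*u) + (1-γ^2*u^2)*(γ/(1-(γ*u)^2))) u := by
      have hb : HasDerivAt (fun w : ℝ => 1-γ^2*w^2) (-(γ^2*(2*u))) u := by
        have h6 := (((hasDerivAt_pow 2 u).const_mul (γ^2)).const_sub 1)
        simpa using h6.congr_deriv (by ring)
      exact hb.mul (hasDerivAt_artanh_comp hu3 hu4)
    have h7 := d1.sub d2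
    refine h7.congr_deriv ?_
    have e1 : (1:ℝ) - u^2 ≠ 0 := by nlinarith
    have e2 : (1:ℝ) - (γ*u)^2 ≠ 0 := by nlinarith
    field_simp [show (1:ℝ) - γ^2*u^2 ≠ 0 by nlinarith, show (1:ℝ) - u^2*γ^2 ≠ 0 by nlinarith]
    ring
  have hmono : StrictMonoOn F (Set.Icc 0 t) := by
    apply strictMonoOn_of_deriv_pos (convex_Icc 0 t)
    · intro u hu
      obtain ⟨b1, b2, b3, b4⟩ := hbound u hu
      exact (hder u b1 b2 b3 b4).continuousAt.continuousWithinAt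
    · intro u hu
      rw [interior_Icc] at hu
      obtain ⟨b1, b2, b3, b4⟩ := hbound u ⟨hu.1.le, hu.2.le⟩
      rw [(hder u b1 b2 b3 b4).deriv]
      have hu0 : 0 < u := hu.1
      have h5 : _root_.artanh u < _root_.artanh (γ*u) := _root_.artanh_lt_artanh b1 (by nlinarith) b4
      have h6 : 0 < _root_.artanh (γ*u) := _root_.artanh_pos (by nlinarith) b4
      have h7 : 0 < γ * _root_.artanh (γ*u) - _root_.artanh u := by nlinarith
      have h8 : (0:ℝ) < 2*γ*u := by positivity
      exact mul_pos h8 h7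
  have h0 : F 0 = 0 := by simp [hF, _root_.artanh_zero]
  have h9 := hmono (Set.left_mem_Icc.2 ht.le) (Set.right_mem_Icc.2 ht.le) ht
  rw [h0] at h9
  simpa [hF] using h9

lemma ratio_mono {γ x y : ℝ} (hγ : 1 < γ) (hx : 0 < x) (hxy : x < y) (hy : γ*y < 1) :
    _root_.artanh (γ*x) * _root_.artanh y < _root_.artanh (γ*y) * _root_.artanh x := by
  have hγ0 : (0:ℝ) < γ := by linarith
  have hy1 : y < 1 := by nlinarith
  set q : ℝ → ℝ := fun t => _root_.artanh (γ*t) / _root_.artanh t with hq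
  have hfacts : ∀ t ∈ Set.Icc x y, 0 < t ∧ t < 1 ∧ γ*t < 1 := by
    rintro t ⟨h1, h2⟩
    refine ⟨by linarith, by linarith, ?_⟩
    have : γ*t ≤ γ*y := by nlinarith
    linarith
  have hder : ∀ t, 0 < t → t < 1 → γ*t < 1 →
      HasDerivAt q ((γ/(1-(γ*t)^2) * _root_.artanh t - _root_.artanh (γ*t) * (1/(1-t^2))) / (_root_.artanh t)^2) t := by
    intro t h1 h2 h3
    exact (hasDerivAt_artanh_comp (by nlinarith) h3).div (hasDerivAt_artanh (by linarith) h2)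
      (_root_.artanh_pos h1 h2).ne'
  have hmono : StrictMonoOn q (Set.Icc x y) := by
    apply strictMonoOn_of_deriv_pos (convex_Icc x y)
    · intro t ht
      obtain ⟨b1, b2, b3⟩ := hfacts t ht
      exact (hder t b1 b2 b3).continuousAt.continuousWithinAt
    · intro t ht
      rw [interior_Icc] at ht
      obtain ⟨b1, b2, b3⟩ := hfacts t ⟨ht.1.le, ht.2.le⟩
      rw [(hder t b1 b2 b3).deriv]
      have e1 : (0:ℝ) < 1 - t^2 := by nlinarith
      have e2 : (0:ℝ) < 1 - γ^2*t^2 := by nlinarith [mul_pos hγ0 b1]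
      have hnum : 0 < γ/(1-(γ*t)^2) * _root_.artanh t - _root_.artanh (γ*t) * (1/(1-t^2)) := by
        have hF := F_pos hγ b1 b3
        have e3 : γ/(1-(γ*t)^2) * _root_.artanh t - _root_.artanh (γ*t) * (1/(1-t^2))
            = (γ*(1-t^2)*_root_.artanh t - (1-γ^2*t^2)*_root_.artanh (γ*t)) / ((1-γ^2*t^2)*(1-t^2)) := by
          have e4 : (1:ℝ) - (γ*t)^2 = 1 - γ^2*t^2 := by ring
          rw [e4]
          field_simp
        rw [e3]
        exact div_pos hF (by positivity)
      have hd : (0:ℝ) < (_root_.artanh t)^2 := by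
        have := _root_.artanh_pos b1 b2; positivity
      exact div_pos hnum hd
  have h9 := hmono (Set.left_mem_Icc.2 hxy.le) (Set.right_mem_Icc.2 hxy.le) hxy
  have hax := _root_.artanh_pos hx (by linarith)
  have hay := _root_.artanh_pos (by linarith : 0 < y) hy1
  rw [hq] at h9
  simp only at h9
  rw [div_lt_div_iff₀ hax hay] at h9
  exact h9

/-! ### helpers for the main theorem -/

lemma sub_unit_ball {c s : ℝ} (hc : 0 ≤ c) (hs : 0 < s)
    (h : closedBall ((c:ℝ):ℂ) s ⊆ ball (0:ℂ) 1) : c + s < 1 := by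
  have hmem : ((c+s : ℝ) : ℂ) ∈ closedBall ((c:ℝ):ℂ) s := by
    rw [mem_closedBall, Complex.dist_eq]
    have h3 : ((c+s : ℝ) : ℂ) - (c : ℂ) = ((s : ℝ) : ℂ) := by push_cast; ring
    rw [h3, Complex.norm_real, Real.norm_eq_abs, abs_of_nonneg hs.le]
  have := h hmem
  rw [mem_ball, Complex.dist_eq, sub_zero, Complex.norm_real, Real.norm_eq_abs,
    abs_of_nonneg (by linarith)] at this
  exact this

lemma smul_cb (γ c s : ℝ) (hγ : 0 < γ) (hs : 0 ≤ s) :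
    γ • closedBall ((c:ℝ):ℂ) s = closedBall ((γ*c : ℝ):ℂ) (γ*s) := by
  rw [smul_closedBall _ _ hs, Real.norm_eq_abs, abs_of_pos hγ, Complex.real_smul,
    ← Complex.ofReal_mul]

/-! ### Main theorem -/

/-- For a disk `D₁ ⊂ U` meeting the fixed disk `D₀ = closedBall 0 r₀` at a fixed
dihedral angle `θ ∈ [0, π/2]`, the hyperbolic radius of `D₁` is strictly
increasing in its euclidean radius; moreover for `γ > 1`,
`ρ_hyp(γD₁)/ρ_hyp(D₁) > ρ_hyp(γD₀)/ρ_hyp(D₀)` whenever the scaled disks stay in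
`U`. -/
theorem stmt12 (r₀ θ : ℝ) (hr₀ : 0 < r₀) (hr₁ : r₀ < 1) (hθ : θ ∈ Set.Icc 0 (π / 2)) :
    (∀ s t : ℝ, 0 < s → s < t →
      closedBall (cen r₀ s θ) s ⊆ ball (0 : ℂ) 1 →
      closedBall (cen r₀ t θ) t ⊆ ball (0 : ℂ) 1 →
      rhyp (closedBall (cen r₀ s θ) s) < rhyp (closedBall (cen r₀ t θ) t)) ∧
    (∀ γ s : ℝ, 1 < γ → 0 < s →
      closedBall (cen r₀ s θ) s ⊆ ball (0 : ℂ) 1 →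
      γ • closedBall (cen r₀ s θ) s ⊆ ball (0 : ℂ) 1 →
      γ • closedBall (0 : ℂ) r₀ ⊆ ball (0 : ℂ) 1 →
      rhyp (γ • closedBall (0 : ℂ) r₀) / rhyp (closedBall (0 : ℂ) r₀) <
        rhyp (γ • closedBall (cen r₀ s θ) s) / rhyp (closedBall (cen r₀ s θ) s)) := by
  obtain ⟨hθ0, hθ1⟩ := hθ
  have hπ : (0:ℝ) < π := Real.pi_pos
  have hcos : 0 ≤ Real.cos θ := Real.cos_nonneg_of_mem_Icc ⟨by linarith, hθ1⟩
  constructor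
  · -- Part 1: strict monotonicity in the euclidean radius
    intro s t hs hst hsub1 hsub2
    have ht : 0 < t := lt_trans hs hst
    set cs := Real.sqrt (r₀^2+s^2+2*r₀*s*Real.cos θ) with hcsdef
    set ct := Real.sqrt (r₀^2+t^2+2*r₀*t*Real.cos θ) with hctdef
    have hcen_s : cen r₀ s θ = ((cs:ℝ):ℂ) := rfl
    have hcen_t : cen r₀ t θ = ((ct:ℝ):ℂ) := rfl
    have hcs0 : 0 ≤ cs := Real.sqrt_nonneg _
    have hct0 : 0 ≤ ct := Real.sqrt_nonneg _
    have hcs2 : cs^2 = r₀^2+s^2+2*r₀*s*Real.cos θ := Real.sq_sqrt (by positivity)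
    have hct2 : ct^2 = r₀^2+t^2+2*r₀*t*Real.cos θ := Real.sq_sqrt (by positivity)
    rw [hcen_s] at hsub1; rw [hcen_t] at hsub2
    have h1s : cs + s < 1 := sub_unit_ball hcs0 hs hsub1
    have h1t : ct + t < 1 := sub_unit_ball hct0 ht hsub2
    rw [hcen_s, hcen_t, rhyp_closedBall_K cs s hcs0 hs h1s,
      rhyp_closedBall_K ct t hct0 ht h1t]
    have hDs : 1 - cs^2 + s^2 = 1 - r₀^2 - 2*r₀*s*Real.cos θ := by rw [hcs2]; ring
    have hDt : 1 - ct^2 + t^2 = 1 - r₀^2 - 2*r₀*t*Real.cos θ := by rw [hct2]; ring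
    rw [hDs, hDt]
    have hs2D : 2*s < 1 - r₀^2 - 2*r₀*s*Real.cos θ := by nlinarith [hcs2, hcs0]
    have ht2D : 2*t < 1 - r₀^2 - 2*r₀*t*Real.cos θ := by nlinarith [hct2, hct0]
    have hDsp : (0:ℝ) < 1 - r₀^2 - 2*r₀*s*Real.cos θ := by linarith
    have hDtp : (0:ℝ) < 1 - r₀^2 - 2*r₀*t*Real.cos θ := by linarith
    apply _root_.artanh_lt_artanh
    · have : (0:ℝ) < 2*s/(1 - r₀^2 - 2*r₀*s*Real.cos θ) := by positivity
      linarith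
    · rw [div_lt_div_iff₀ hDsp hDtp]
      nlinarith [mul_nonneg (mul_nonneg (mul_nonneg hr₀.le hcos) hs.le) (sub_nonneg.2 hst.le)]
    · rw [div_lt_one hDtp]; linarith
  · -- Part 2: the ratio inequality
    intro γ s hγ hs hsub hγsub hγ0sub
    have hγ0 : (0:ℝ) < γ := by linarith
    set c := Real.sqrt (r₀^2+s^2+2*r₀*s*Real.cos θ) with hcdef
    have hcen : cen r₀ s θ = ((c:ℝ):ℂ) := rfl
    rw [hcen] at hsub hγsub ⊢
    have hc0 : 0 ≤ c := Real.sqrt_nonneg _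
    have hc2 : c^2 = r₀^2+s^2+2*r₀*s*Real.cos θ := Real.sq_sqrt (by positivity)
    have h1 : c + s < 1 := sub_unit_ball hc0 hs hsub
    rw [smul_cb γ c s hγ0 hs.le] at hγsub
    have h2 : γ*c + γ*s < 1 := sub_unit_ball (by positivity) (by positivity) hγsub
    have e0 : γ • closedBall (0:ℂ) r₀ = closedBall (((0:ℝ)):ℂ) (γ*r₀) := by
      rw [show (0:ℂ) = ((0:ℝ):ℂ) by norm_num, smul_cb γ 0 r₀ hγ0 hr₀.le, mul_zero]
    rw [e0] at hγ0sub
    have hγr' : (0:ℝ) + γ*r₀ < 1 := sub_unit_ball le_rfl (by positivity) hγ0sub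
    have hγr : γ*r₀ < 1 := by linarith
    have R0 : rhyp (closedBall (0:ℂ) r₀) = 2 * _root_.artanh r₀ := by
      rw [show (0:ℂ) = ((0:ℝ):ℂ) by norm_num,
        rhyp_closedBall 0 r₀ le_rfl hr₀ (by linarith), zero_add, zero_sub, _root_.artanh_neg]
      ring
    have R0' : rhyp (γ • closedBall (0:ℂ) r₀) = 2 * _root_.artanh (γ*r₀) := by
      rw [e0, rhyp_closedBall 0 (γ*r₀) le_rfl (by positivity) (by linarith),
        zero_add, zero_sub, _root_.artanh_neg]
      ring
    have R1 : rhyp (closedBall ((c:ℝ):ℂ) s) = _root_.artanh (c+s) - _root_.artanh (c-s) :=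
      rhyp_closedBall c s hc0 hs h1
    have R1' : rhyp (γ • closedBall ((c:ℝ):ℂ) s) = _root_.artanh (γ*(c+s)) - _root_.artanh (γ*(c-s)) := by
      rw [smul_cb γ c s hγ0 hs.le,
        rhyp_closedBall (γ*c) (γ*s) (by positivity) (by positivity) h2, ← mul_add, ← mul_sub]
    rw [R0, R0', R1, R1']
    have hsc2 : s^2 < c^2 := by nlinarith [mul_nonneg (mul_nonneg (by positivity : (0:ℝ) ≤ 2*r₀) hs.le) hcos]
    have hsc : s < c := by nlinarith
    have hrc2 : r₀^2 < c^2 := by nlinarith [mul_nonneg (mul_nonneg (by positivity : (0:ℝ) ≤ 2*r₀) hs.le) hcos]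
    have hrc : r₀ < c := by nlinarith
    have ha0 : 0 < c - s := by linarith
    have hγb : γ*(c+s) < 1 := by
      have e : γ*(c+s) = γ*c + γ*s := by ring
      linarith [e.le, e.ge]
    have K1 := ratio_mono hγ hr₀ (show r₀ < c+s by linarith) hγb
    have K2 := ratio_mono hγ ha0 (show c-s < c+s by linarith) hγb
    have hA : 0 < _root_.artanh (c-s) := _root_.artanh_pos ha0 (by linarith)
    have hB : 0 < _root_.artanh (c+s) := _root_.artanh_pos (by linarith) (by linarith)
    have hR : 0 < _root_.artanh r₀ := _root_.artanh_pos hr₀ hr₁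
    have hGR : 0 < _root_.artanh (γ*r₀) := _root_.artanh_pos (by positivity) hγr
    have hBA : _root_.artanh (c-s) < _root_.artanh (c+s) :=
      _root_.artanh_lt_artanh (by linarith) (by linarith) (by linarith)
    have hGBA : _root_.artanh (γ*(c-s)) < _root_.artanh (γ*(c+s)) := by
      apply _root_.artanh_lt_artanh _ _ hγb
      · have : 0 < γ*(c-s) := by positivity
        linarith
      · nlinarith
    rw [div_lt_div_iff₀ (by positivity) (by linarith)]
    nlinarith [mul_lt_mul_of_pos_right K1 (sub_pos.2 hBA),
      mul_lt_mul_of_pos_left K2 hR, hB, hGR, hR, hBA, hGBA, hA,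
      mul_pos hGR (sub_pos.2 hBA), mul_pos hR (sub_pos.2 hGBA)]
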